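/- Suppose p = (α₁₂,α₂₃,α₃₁,γ₁,γ₂,γ₃) ∈ Δ̄∖Δ is α-degenerate (all five of its associated triples lie in Δ₀). Then γ₁ > 0, γ₂ > 0, γ₃ > 0, the strict inequalities γ₁+α₁₂+α₃₁ < π, γ₂+α₂₃+α₁₂ < π, γ₃+α₃₁+α₂₃ < π hold, and at least one of α₁₂, α₂₃, α₃₁ equals 0. -/
import Mathlib

open Real

/-- Membership of a triple in Δ₀. -/
def InD0 (x y z : ℝ) : Prop := 0 < x ∧ 0 < y ∧ 0 < z ∧ x + y + z = π

/-- Membership of `(α₁₂,α₂₃,α₃₁,γ₁,γ₂,γ₃)` in Δ. -/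
def InD (a12 a23 a31 g1 g2 g3 : ℝ) : Prop :=
  0 < a12 ∧ 0 < a23 ∧ 0 < a31 ∧ 0 < g1 ∧ 0 < g2 ∧ 0 < g3 ∧
  g1 + g2 + g3 = π ∧
  g1 + a12 + a31 < π ∧ g2 + a23 + a12 < π ∧ g3 + a31 + a23 < π

/-- Membership of `(α₁₂,α₂₃,α₃₁,γ₁,γ₂,γ₃)` in the closure Δ̄. -/
def InDbar (a12 a23 a31 g1 g2 g3 : ℝ) : Prop :=
  0 ≤ a12 ∧ 0 ≤ a23 ∧ 0 ≤ a31 ∧ 0 ≤ g1 ∧ 0 ≤ g2 ∧ 0 ≤ g3 ∧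
  g1 + g2 + g3 = π ∧
  g1 + a12 + a31 ≤ π ∧ g2 + a23 + a12 ≤ π ∧ g3 + a31 + a23 ≤ π

theorem alpha_degenerate_structure (a12 a23 a31 g1 g2 g3 : ℝ)
    (hbar : InDbar a12 a23 a31 g1 g2 g3) (hni : ¬ InD a12 a23 a31 g1 g2 g3)
    (h1 : InD0 ((π + a31 - a12 - g1) / 2) ((π + a12 - a23 - g2) / 2)
      ((π + a23 - a31 - g3) / 2))
    (h2 : InD0 ((π - a31 + a12 - g1) / 2) ((π - a12 + a23 - g2) / 2)
      ((π - a23 + a31 - g3) / 2))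
    (h3 : InD0 g1 ((π + a31 + a12 - g1) / 2) ((π - a31 - a12 - g1) / 2))
    (h4 : InD0 g2 ((π + a12 + a23 - g2) / 2) ((π - a12 - a23 - g2) / 2))
    (h5 : InD0 g3 ((π + a23 + a31 - g3) / 2) ((π - a23 - a31 - g3) / 2)) :
    0 < g1 ∧ 0 < g2 ∧ 0 < g3 ∧
    g1 + a12 + a31 < π ∧ g2 + a23 + a12 < π ∧ g3 + a31 + a23 < π ∧
    (a12 = 0 ∨ a23 = 0 ∨ a31 = 0) := by
  obtain ⟨b12, b23, b31, _, _, _, hsum, _, _, _⟩ := hbar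
  obtain ⟨hg1, _, h3v, _⟩ := h3
  obtain ⟨hg2, _, h4v, _⟩ := h4
  obtain ⟨hg3, _, h5v, _⟩ := h5
  have l1 : g1 + a12 + a31 < π := by linarith
  have l2 : g2 + a23 + a12 < π := by linarith
  have l3 : g3 + a31 + a23 < π := by linarith
  refine ⟨hg1, hg2, hg3, l1, l2, l3, ?_⟩
  by_contra h
  push_neg at h
  obtain ⟨n1, n2, n3⟩ := h
  exact hni ⟨b12.lt_of_ne (Ne.symm n1), b23.lt_of_ne (Ne.symm n2),
    b31.lt_of_ne (Ne.symm n3), hg1, hg2, hg3, hsum, l1, l2, l3⟩
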